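/- Let 0 ≤ δ < 1/4 and let (H₁, H₂, H₃) be a δ-representation of the sphere by n×n complex matrices. Set S = S(H₁,H₂,H₃), the 2n×2n Hermitian block matrix [[H₃, H₁ − iH₂], [H₁ + iH₂, −H₃]]. Then ‖S² − I‖ ≤ 4δ, and every eigenvalue λ of S satisfies 1 − 4δ ≤ λ² ≤ 1 + 4δ; in particular the spectrum of S is contained in [−√(1+4δ), −√(1−4δ)] ∪ [√(1−4δ), √(1+4δ)], so S is invertible. -/

import Mathlib

open Matrix

noncomputable section

namespace AC

variable {m : Type*} [Fintype m] [DecidableEq m]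

/-- The ℓ² operator norm of a complex matrix. -/
def opNorm (A : Matrix m m ℂ) : ℝ :=
  ‖Matrix.toEuclideanCLM (𝕜 := ℂ) A‖

/-- `(H₁, H₂, H₃)` is a δ-representation of the sphere: each `Hᵣ` is Hermitian, all
commutators have ℓ²-operator norm at most `δ`, and `‖H₁² + H₂² + H₃² − I‖ ≤ δ`. -/
def IsSphereRep (δ : ℝ) (H₁ H₂ H₃ : Matrix m m ℂ) : Prop :=
  H₁.IsHermitian ∧ H₂.IsHermitian ∧ H₃.IsHermitian ∧
  opNorm (H₁ * H₂ - H₂ * H₁) ≤ δ ∧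
  opNorm (H₁ * H₃ - H₃ * H₁) ≤ δ ∧
  opNorm (H₂ * H₃ - H₃ * H₂) ≤ δ ∧
  opNorm (H₁ ^ 2 + H₂ ^ 2 + H₃ ^ 2 - 1) ≤ δ

/-- The 2n×2n Hermitian block matrix `S(H₁,H₂,H₃) = [[H₃, H₁ − iH₂], [H₁ + iH₂, −H₃]]`. -/
def sphS (H₁ H₂ H₃ : Matrix m m ℂ) : Matrix (m ⊕ m) (m ⊕ m) ℂ :=
  Matrix.fromBlocks H₃ (H₁ - Complex.I • H₂) (H₁ + Complex.I • H₂) (-H₃)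

open Classical in
/-- The Bott index: the number of positive eigenvalues (with multiplicity) of
`S(H₁,H₂,H₃)` minus `n`.  (Junk value `0` if `S(H₁,H₂,H₃)` is not Hermitian.) -/
def bott (H₁ H₂ H₃ : Matrix m m ℂ) : ℤ :=
  if h : (sphS H₁ H₂ H₃).IsHermitian then
    ((Finset.univ.filter fun i => 0 < h.eigenvalues i).card : ℤ) - Fintype.card m
  else 0

end AC



open Matrix
open scoped Matrix.Norms.L2Operator

noncomputable section

namespace SphAux

variable {m : Type*} [Fintype m] [DecidableEq m]

lemma norm_one_le : ‖(1 : Matrix m m ℂ)‖ ≤ 1 := by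
  rw [Matrix.cstar_norm_def, _root_.map_one]
  exact ContinuousLinearMap.norm_id_le

lemma norm_sq_split (y : EuclideanSpace ℂ (m ⊕ m)) :
    ‖y‖ ^ 2 = ‖((WithLp.equiv 2 (m → ℂ)).symm fun i => y (Sum.inl i))‖ ^ 2 +
      ‖((WithLp.equiv 2 (m → ℂ)).symm fun i => y (Sum.inr i))‖ ^ 2 := by
  simp only [EuclideanSpace.norm_eq]
  rw [Real.sq_sqrt (by positivity), Real.sq_sqrt (by positivity),
    Real.sq_sqrt (by positivity), Fintype.sum_sum_type]
  rfl

lemma norm_fromBlocks_diag_le (A D : Matrix m m ℂ) :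
    ‖Matrix.fromBlocks A 0 0 D‖ ≤ max ‖A‖ ‖D‖ := by
  set K := max ‖A‖ ‖D‖ with hKdef
  have hK : 0 ≤ K := le_trans (norm_nonneg A) (le_max_left _ _)
  rw [Matrix.l2_opNorm_def]
  refine ContinuousLinearMap.opNorm_le_bound _ hK fun x => ?_
  have hx : 0 ≤ K * ‖x‖ := mul_nonneg hK (norm_nonneg x)
  have hsq : ‖(LinearEquiv.trans Matrix.toEuclideanLin
        LinearMap.toContinuousLinearMap (Matrix.fromBlocks A 0 0 D)) x‖ ^ 2 ≤ (K * ‖x‖) ^ 2 := by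
    set x₁ : EuclideanSpace ℂ m := (WithLp.equiv 2 (m → ℂ)).symm fun i => x (Sum.inl i)
    set x₂ : EuclideanSpace ℂ m := (WithLp.equiv 2 (m → ℂ)).symm fun i => x (Sum.inr i)
    have hmv : (LinearEquiv.trans Matrix.toEuclideanLin
        LinearMap.toContinuousLinearMap (Matrix.fromBlocks A 0 0 D)) x =
        (WithLp.equiv 2 ((m ⊕ m) → ℂ)).symm
          (Sum.elim (A *ᵥ fun i => x (Sum.inl i)) (D *ᵥ fun i => x (Sum.inr i))) := by
      show Matrix.toEuclideanLin (Matrix.fromBlocks A 0 0 D) x = _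
      rw [Matrix.toEuclideanLin_apply]
      congr 1
      have : (WithLp.equiv 2 ((m ⊕ m) → ℂ)) x =
          Sum.elim (fun i => x (Sum.inl i)) (fun i => x (Sum.inr i)) := by
        funext i; cases i <;> rfl
      rw [show x.ofLp = _ from this, Matrix.fromBlocks_mulVec]
      simp
    rw [hmv, norm_sq_split]
    have e1 : ((WithLp.equiv 2 (m → ℂ)).symm fun i =>
        ((WithLp.equiv 2 ((m ⊕ m) → ℂ)).symm
          (Sum.elim (A *ᵥ fun i => x (Sum.inl i)) (D *ᵥ fun i => x (Sum.inr i)))) (Sum.inl i)) =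
        (EuclideanSpace.equiv m ℂ).symm (A *ᵥ (WithLp.equiv 2 (m → ℂ)) x₁) := rfl
    have e2 : ((WithLp.equiv 2 (m → ℂ)).symm fun i =>
        ((WithLp.equiv 2 ((m ⊕ m) → ℂ)).symm
          (Sum.elim (A *ᵥ fun i => x (Sum.inl i)) (D *ᵥ fun i => x (Sum.inr i)))) (Sum.inr i)) =
        (EuclideanSpace.equiv m ℂ).symm (D *ᵥ (WithLp.equiv 2 (m → ℂ)) x₂) := rfl
    rw [e1, e2]
    have h1 := Matrix.l2_opNorm_mulVec A x₁
    have h2 := Matrix.l2_opNorm_mulVec D x₂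
    have b1 : ‖(EuclideanSpace.equiv m ℂ).symm (A *ᵥ (WithLp.equiv 2 (m → ℂ)) x₁)‖ ^ 2 ≤
        K ^ 2 * ‖x₁‖ ^ 2 := by
      calc _ ≤ (‖A‖ * ‖x₁‖) ^ 2 := by
              apply pow_le_pow_left₀ (norm_nonneg _) h1
        _ ≤ (K * ‖x₁‖) ^ 2 := by
              apply pow_le_pow_left₀ (mul_nonneg (norm_nonneg _) (norm_nonneg _))
              exact mul_le_mul_of_nonneg_right (le_max_left _ _) (norm_nonneg _)
        _ = K ^ 2 * ‖x₁‖ ^ 2 := by ring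
    have b2 : ‖(EuclideanSpace.equiv m ℂ).symm (D *ᵥ (WithLp.equiv 2 (m → ℂ)) x₂)‖ ^ 2 ≤
        K ^ 2 * ‖x₂‖ ^ 2 := by
      calc _ ≤ (‖D‖ * ‖x₂‖) ^ 2 := by
              apply pow_le_pow_left₀ (norm_nonneg _) h2
        _ ≤ (K * ‖x₂‖) ^ 2 := by
              apply pow_le_pow_left₀ (mul_nonneg (norm_nonneg _) (norm_nonneg _))
              exact mul_le_mul_of_nonneg_right (le_max_right _ _) (norm_nonneg _)
        _ = K ^ 2 * ‖x₂‖ ^ 2 := by ring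
    have hxsplit : ‖x‖ ^ 2 = ‖x₁‖ ^ 2 + ‖x₂‖ ^ 2 := norm_sq_split x
    calc _ ≤ K ^ 2 * ‖x₁‖ ^ 2 + K ^ 2 * ‖x₂‖ ^ 2 := add_le_add b1 b2
      _ = (K * ‖x‖) ^ 2 := by rw [mul_pow, hxsplit]; ring
  have h := Real.sqrt_le_sqrt hsq
  rwa [Real.sqrt_sq (norm_nonneg _), Real.sqrt_sq hx] at h

lemma norm_swapBlocks_le : ‖Matrix.fromBlocks (0 : Matrix m m ℂ) (1 : Matrix m m ℂ) (1 : Matrix m m ℂ) (0 : Matrix m m ℂ)‖ ≤ 1 := by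
  have hsq : Matrix.fromBlocks (0 : Matrix m m ℂ) (1 : Matrix m m ℂ) (1 : Matrix m m ℂ) (0 : Matrix m m ℂ) * Matrix.fromBlocks (0 : Matrix m m ℂ) (1 : Matrix m m ℂ) (1 : Matrix m m ℂ) (0 : Matrix m m ℂ) = 1 := by
    rw [Matrix.fromBlocks_multiply]
    simp [Matrix.fromBlocks_one]
  have hherm : (Matrix.fromBlocks (0 : Matrix m m ℂ) (1 : Matrix m m ℂ) (1 : Matrix m m ℂ) (0 : Matrix m m ℂ))ᴴ =
      Matrix.fromBlocks (0 : Matrix m m ℂ) (1 : Matrix m m ℂ) (1 : Matrix m m ℂ) (0 : Matrix m m ℂ) := by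
    rw [Matrix.fromBlocks_conjTranspose]; simp
  have h2 : ‖Matrix.fromBlocks (0 : Matrix m m ℂ) (1 : Matrix m m ℂ) (1 : Matrix m m ℂ) (0 : Matrix m m ℂ)‖ *
      ‖Matrix.fromBlocks (0 : Matrix m m ℂ) (1 : Matrix m m ℂ) (1 : Matrix m m ℂ) (0 : Matrix m m ℂ)‖ ≤ 1 := by
    rw [← Matrix.l2_opNorm_conjTranspose_mul_self, hherm, hsq]
    exact norm_one_le
  nlinarith [norm_nonneg (Matrix.fromBlocks (0 : Matrix m m ℂ) (1 : Matrix m m ℂ) (1 : Matrix m m ℂ) (0 : Matrix m m ℂ))]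

lemma norm_fromBlocks_offdiag_le (B C : Matrix m m ℂ) :
    ‖Matrix.fromBlocks 0 B C 0‖ ≤ max ‖B‖ ‖C‖ := by
  have hfac : Matrix.fromBlocks (0 : Matrix m m ℂ) B C 0 =
      Matrix.fromBlocks (0 : Matrix m m ℂ) (1 : Matrix m m ℂ) (1 : Matrix m m ℂ) (0 : Matrix m m ℂ) * Matrix.fromBlocks C 0 0 B := by
    rw [Matrix.fromBlocks_multiply]; simp
  rw [hfac]
  calc ‖Matrix.fromBlocks (0 : Matrix m m ℂ) (1 : Matrix m m ℂ) (1 : Matrix m m ℂ) (0 : Matrix m m ℂ) * Matrix.fromBlocks C 0 0 B‖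
      ≤ ‖Matrix.fromBlocks (0 : Matrix m m ℂ) (1 : Matrix m m ℂ) (1 : Matrix m m ℂ) (0 : Matrix m m ℂ)‖ * ‖Matrix.fromBlocks C 0 0 B‖ :=
        Matrix.l2_opNorm_mul _ _
    _ ≤ 1 * ‖Matrix.fromBlocks C 0 0 B‖ :=
        mul_le_mul_of_nonneg_right norm_swapBlocks_le (norm_nonneg _)
    _ = ‖Matrix.fromBlocks C 0 0 B‖ := one_mul _
    _ ≤ max ‖C‖ ‖B‖ := norm_fromBlocks_diag_le C B
    _ = max ‖B‖ ‖C‖ := max_comm _ _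

lemma fromBlocks_sub (A B C D A' B' C' D' : Matrix m m ℂ) :
    Matrix.fromBlocks A B C D - Matrix.fromBlocks A' B' C' D' =
      Matrix.fromBlocks (A - A') (B - B') (C - C') (D - D') := by
  rw [sub_eq_add_neg, Matrix.fromBlocks_neg, Matrix.fromBlocks_add]
  simp [sub_eq_add_neg]

lemma abs_le_opNorm_of_mulVec_eq {N : Type*} [Fintype N] [DecidableEq N]
    (M : Matrix N N ℂ) (v : EuclideanSpace ℂ N) (c : ℝ)
    (h : M *ᵥ ⇑v = c • ⇑v) (hv : ‖v‖ = 1) : |c| ≤ ‖M‖ := by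
  have hle : ‖(EuclideanSpace.equiv N ℂ).symm (M *ᵥ ⇑v)‖ ≤ ‖M‖ * ‖v‖ :=
    Matrix.l2_opNorm_mulVec M v
  rw [h] at hle
  have hident : (EuclideanSpace.equiv N ℂ).symm (c • ⇑v) = c • v := rfl
  rw [hident, norm_smul, Real.norm_eq_abs, hv, mul_one, mul_one] at hle
  exact hle

end SphAux

open scoped Matrix.Norms.L2Operator

section SphAuxMain

open Matrix
open scoped Matrix.Norms.L2Operator

namespace SphAux

lemma opNorm_eq {m : Type*} [Fintype m] [DecidableEq m] (A : Matrix m m ℂ) :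
    AC.opNorm A = ‖A‖ := rfl

end SphAux

end SphAuxMain

/-- Lemma (`lem:boundPsquareMinusP`): if `(H₁,H₂,H₃)` is a δ-representation of the sphere
with `0 ≤ δ < 1/4` and `S = S(H₁,H₂,H₃)`, then `‖S² − I‖ ≤ 4δ`, every eigenvalue `λ` of
`S` satisfies `1 − 4δ ≤ λ² ≤ 1 + 4δ` (i.e. the spectrum of `S` lies in
`[−√(1+4δ), −√(1−4δ)] ∪ [√(1−4δ), √(1+4δ)]`), and `S` is invertible. -/
theorem sphS_sq_close_to_one {n : ℕ} (δ : ℝ) (hδ0 : 0 ≤ δ) (hδ : δ < 1/4)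
    (H₁ H₂ H₃ : Matrix (Fin n) (Fin n) ℂ)
    (hrep : AC.IsSphereRep δ H₁ H₂ H₃) :
    AC.opNorm (AC.sphS H₁ H₂ H₃ * AC.sphS H₁ H₂ H₃ - 1) ≤ 4 * δ ∧
    (∀ (hS : (AC.sphS H₁ H₂ H₃).IsHermitian) (i : Fin n ⊕ Fin n),
      1 - 4 * δ ≤ hS.eigenvalues i ^ 2 ∧ hS.eigenvalues i ^ 2 ≤ 1 + 4 * δ ∧
      (hS.eigenvalues i ∈ Set.Icc (-Real.sqrt (1 + 4*δ)) (-Real.sqrt (1 - 4*δ)) ∨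
       hS.eigenvalues i ∈ Set.Icc (Real.sqrt (1 - 4*δ)) (Real.sqrt (1 + 4*δ)))) ∧
    IsUnit (AC.sphS H₁ H₂ H₃) := by
  obtain ⟨h1, h2, h3, hc12, hc13, hc23, hE⟩ := hrep
  rw [SphAux.opNorm_eq] at *
  set E : Matrix (Fin n) (Fin n) ℂ := H₁ ^ 2 + H₂ ^ 2 + H₃ ^ 2 - 1 with hEdef
  set C₁₂ : Matrix (Fin n) (Fin n) ℂ := H₁ * H₂ - H₂ * H₁ with hC12def
  set C₁₃ : Matrix (Fin n) (Fin n) ℂ := H₁ * H₃ - H₃ * H₁ with hC13def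
  set C₂₃ : Matrix (Fin n) (Fin n) ℂ := H₂ * H₃ - H₃ * H₂ with hC23def
  set S := AC.sphS H₁ H₂ H₃ with hSdef
  -- the decomposition of S² - 1
  have hdecomp : S * S - 1 =
      Matrix.fromBlocks E 0 0 E +
      Matrix.fromBlocks (Complex.I • C₁₂) 0 0 (-(Complex.I • C₁₂)) +
      Matrix.fromBlocks 0 (-C₁₃ + Complex.I • C₂₃) (C₁₃ + Complex.I • C₂₃) 0 := by
    rw [hSdef]
    unfold AC.sphS
    rw [Matrix.fromBlocks_multiply, ← Matrix.fromBlocks_one, SphAux.fromBlocks_sub,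
      Matrix.fromBlocks_add, Matrix.fromBlocks_add]
    rw [Matrix.fromBlocks_inj]
    refine ⟨?_, ?_, ?_, ?_⟩
    · -- top-left
      rw [hEdef, hC12def]
      simp only [mul_add, add_mul, sub_mul, mul_sub, Matrix.smul_mul, Matrix.mul_smul,
        smul_smul, Complex.I_mul_I, neg_one_smul, smul_sub, smul_add, pow_two,
        mul_neg, neg_mul, neg_neg, smul_neg]
      module
    · -- top-right
      rw [hC13def, hC23def]
      simp only [mul_add, add_mul, sub_mul, mul_sub, Matrix.smul_mul, Matrix.mul_smul,
        mul_neg, neg_mul, smul_sub, smul_add, smul_neg]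
      module
    · -- bottom-left
      rw [hC13def, hC23def]
      simp only [mul_add, add_mul, sub_mul, mul_sub, Matrix.smul_mul, Matrix.mul_smul,
        mul_neg, neg_mul, smul_sub, smul_add, smul_neg]
      module
    · -- bottom-right
      rw [hEdef, hC12def]
      simp only [mul_add, add_mul, sub_mul, mul_sub, Matrix.smul_mul, Matrix.mul_smul,
        smul_smul, Complex.I_mul_I, neg_one_smul, smul_sub, smul_add, pow_two,
        mul_neg, neg_mul, neg_neg, smul_neg]
      module
  -- norm bound
  have hIsm : ∀ M : Matrix (Fin n) (Fin n) ℂ, ‖Complex.I • M‖ = ‖M‖ := fun M => by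
    rw [norm_smul, Complex.norm_I, one_mul]
  have hnorm : ‖S * S - 1‖ ≤ 4 * δ := by
    rw [hdecomp]
    have b1 : ‖Matrix.fromBlocks E 0 0 E‖ ≤ δ := by
      refine le_trans (SphAux.norm_fromBlocks_diag_le E E) ?_
      simpa using hE
    have b2 : ‖Matrix.fromBlocks (Complex.I • C₁₂) 0 0 (-(Complex.I • C₁₂))‖ ≤ δ := by
      refine le_trans (SphAux.norm_fromBlocks_diag_le _ _) ?_
      rw [norm_neg, hIsm, max_self]
      exact hc12
    have b3 : ‖Matrix.fromBlocks (0 : Matrix (Fin n) (Fin n) ℂ)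
        (-C₁₃ + Complex.I • C₂₃) (C₁₃ + Complex.I • C₂₃) 0‖ ≤ 2 * δ := by
      refine le_trans (SphAux.norm_fromBlocks_offdiag_le _ _) ?_
      have t1 : ‖-C₁₃ + Complex.I • C₂₃‖ ≤ 2 * δ := by
        refine le_trans (norm_add_le _ _) ?_
        rw [norm_neg, hIsm]
        linarith
      have t2 : ‖C₁₃ + Complex.I • C₂₃‖ ≤ 2 * δ := by
        refine le_trans (norm_add_le _ _) ?_
        rw [hIsm]
        linarith
      exact max_le t1 t2
    have h4 := norm_add_le (Matrix.fromBlocks E 0 0 E +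
      Matrix.fromBlocks (Complex.I • C₁₂) 0 0 (-(Complex.I • C₁₂)))
      (Matrix.fromBlocks 0 (-C₁₃ + Complex.I • C₂₃) (C₁₃ + Complex.I • C₂₃) 0)
    have h5 := norm_add_le (Matrix.fromBlocks E 0 0 E)
      (Matrix.fromBlocks (Complex.I • C₁₂) 0 0 (-(Complex.I • C₁₂)))
    linarith
  -- eigenvalue bounds
  have heig : ∀ (hS : S.IsHermitian) (i : Fin n ⊕ Fin n),
      1 - 4 * δ ≤ hS.eigenvalues i ^ 2 ∧ hS.eigenvalues i ^ 2 ≤ 1 + 4 * δ := by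
    intro hS i
    set lam := hS.eigenvalues i with hlam
    set v := hS.eigenvectorBasis i with hv
    have hmv : S *ᵥ ⇑v = lam • ⇑v := hS.mulVec_eigenvectorBasis i
    have hv2 : (S * S - 1) *ᵥ ⇑v = (lam ^ 2 - 1 : ℝ) • ⇑v := by
      rw [Matrix.sub_mulVec, ← Matrix.mulVec_mulVec, hmv, Matrix.mulVec_smul, hmv,
        Matrix.one_mulVec, smul_smul, sub_smul, one_smul, pow_two]
    have hvnorm : ‖v‖ = 1 := hS.eigenvectorBasis.orthonormal.1 i
    have hkey : |lam ^ 2 - 1| ≤ 4 * δ :=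
      le_trans (SphAux.abs_le_opNorm_of_mulVec_eq (S * S - 1) v _ hv2 hvnorm) hnorm
    have := abs_le.1 hkey
    constructor <;> linarith [this.1, this.2]
  have hpos : 0 < 1 - 4 * δ := by linarith
  refine ⟨hnorm, fun hS i => ?_, ?_⟩
  · obtain ⟨hlo, hhi⟩ := heig hS i
    refine ⟨hlo, hhi, ?_⟩
    set lam := hS.eigenvalues i with hlam
    have habs1 : Real.sqrt (1 - 4 * δ) ≤ |lam| := by
      rw [← Real.sqrt_sq_eq_abs]
      exact Real.sqrt_le_sqrt hlo
    have habs2 : |lam| ≤ Real.sqrt (1 + 4 * δ) := by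
      rw [← Real.sqrt_sq_eq_abs]
      exact Real.sqrt_le_sqrt hhi
    rcases le_or_gt 0 lam with hl | hl
    · right
      rw [abs_of_nonneg hl] at habs1 habs2
      exact ⟨by simpa using habs1, by simpa using habs2⟩
    · left
      rw [abs_of_neg hl] at habs1 habs2
      exact ⟨by linarith, by linarith⟩
  · -- invertibility
    have hSh : S.IsHermitian := by
      rw [hSdef]
      unfold AC.sphS
      show _ᴴ = _
      rw [Matrix.fromBlocks_conjTranspose]
      congr 1 <;>
        simp [Matrix.conjTranspose_add, Matrix.conjTranspose_sub, Matrix.conjTranspose_smul,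
          Complex.star_def, Complex.conj_I, h1.eq, h2.eq, h3.eq, neg_smul, sub_eq_add_neg]
    refine (Matrix.isUnit_iff_isUnit_det S).2 (isUnit_iff_ne_zero.2 ?_)
    rw [hSh.det_eq_prod_eigenvalues]
    refine Finset.prod_ne_zero_iff.2 fun i _ => ?_
    have hlo := (heig hSh i).1
    intro hzero
    have : hSh.eigenvalues i = 0 := by
      simpa using hzero
    rw [this] at hlo
    nlinarith
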